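/- Let w be a weight on ℝ^n such that w does not charge boundaries of cubes and satisfies the growth bound of Corollary on cube ratios: there exist C, γ > 0 with w(Q_1)/w(Q_2) ≥ C (r_1/r_2)^γ for all cubes Q_1 ⊆ Q_2. Then for every finite collection of cubes {Q_j}_{j=1}^N and ξ ∈ (0,1) there is a subcollection {Q̃_k}_{k=1}^M such that: (i) w(∪_{j=1}^N Q_j) ≤ (1 + C' ξ^{c'}) w(∪_{k=1}^M Q̃_k) for constants C', c' depending only on n, w; and (ii) for every k ≥ 2, w(Q̃_k \ ∪_{l<k} Q̃_l) > ξ w(Q̃_k). -/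

import Mathlib

open Metric Set

open Classical in
noncomputable def cfGreedy {N : ℕ} (good : Fin N → List (Fin N) → Prop) : ℕ → List (Fin N)
  | 0 => []
  | (i+1) =>
    if h : ∃ hi : i < N, good ⟨i, hi⟩ (cfGreedy good i)
    then cfGreedy good i ++ [⟨i, h.choose⟩]
    else cfGreedy good i

theorem cfGreedy_mem_lt {N : ℕ} (good : Fin N → List (Fin N) → Prop) (i : ℕ) :
    ∀ x ∈ cfGreedy good i, (x : ℕ) < i := by
  induction i with
  | zero => simp [cfGreedy]
  | succ i ih =>
    intro x hx
    rw [cfGreedy] at hx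
    split at hx
    · rcases List.mem_append.1 hx with h | h
      · exact (ih x h).trans (Nat.lt_succ_self i)
      · simp at h; simp [h]
    · exact (ih x hx).trans (Nat.lt_succ_self i)

theorem cfGreedy_prefix {N : ℕ} (good : Fin N → List (Fin N) → Prop) {i m : ℕ} (h : i ≤ m) :
    (cfGreedy good i) <+: cfGreedy good m := by
  induction m with
  | zero => simp_all
  | succ m ih =>
    rcases Nat.lt_or_ge i (m+1) with h' | h'
    · have := ih (Nat.lt_succ_iff.1 h')
      refine this.trans ?_
      rw [cfGreedy]
      split
      · exact ⟨_, rfl⟩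
      · exact List.prefix_refl _
    · have : i = m + 1 := le_antisymm h h'
      subst this; exact List.prefix_refl _

theorem cfGreedy_pairwise {N : ℕ} (good : Fin N → List (Fin N) → Prop) (i : ℕ) :
    (cfGreedy good i).Pairwise (fun a b : Fin N => (a : ℕ) < (b : ℕ)) := by
  induction i with
  | zero => simp [cfGreedy]
  | succ i ih =>
    rw [cfGreedy]
    split
    · refine List.pairwise_append.2 ⟨ih, by simp, ?_⟩
      intro a ha b hb
      simp at hb
      rw [hb]
      exact cfGreedy_mem_lt good i a ha
    · exact ih

theorem cfGreedy_mem_of_good {N : ℕ} (good : Fin N → List (Fin N) → Prop) {j m : ℕ}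
    (hj : j < N) (hjm : j < m) (hg : good ⟨j, hj⟩ (cfGreedy good j)) :
    (⟨j, hj⟩ : Fin N) ∈ cfGreedy good m := by
  have h1 : (⟨j, hj⟩ : Fin N) ∈ cfGreedy good (j+1) := by
    rw [cfGreedy]
    have h : ∃ hi : j < N, good ⟨j, hi⟩ (cfGreedy good j) := ⟨hj, hg⟩
    rw [dif_pos h]
    simp
  exact (cfGreedy_prefix good hjm).subset h1

theorem cfGreedy_take {N : ℕ} (good : Fin N → List (Fin N) → Prop) (i : ℕ) :
    ∀ (L : List (Fin N)) (x : Fin N), L ++ [x] <+: cfGreedy good i →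
      L = cfGreedy good (x : ℕ) ∧ good x (cfGreedy good (x : ℕ)) := by
  induction i with
  | zero =>
    intro L x h
    have := h.length_le
    simp [cfGreedy] at this
  | succ i ih =>
    intro L x h
    rw [cfGreedy] at h
    split at h
    case isTrue hcond =>
      rcases List.prefix_concat_iff.1 h with h | h
      · have he : L = cfGreedy good i ∧ x = ⟨i, hcond.choose⟩ := by
          have := List.append_inj' h rfl
          simpa using this
        rcases he with ⟨h1, h2⟩
        subst h1; subst h2
        exact ⟨rfl, hcond.choose_spec⟩
      · exact ih L x h
    case isFalse hcond => exact ih L x h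
open Set

theorem biUnion_take {α β : Type*} (L : List α) (f : α → Set β) (k : ℕ) :
    (⋃ (l : Fin L.length) (_ : (l : ℕ) < k), f (L.get l)) = ⋃ x ∈ L.take k, f x := by
  ext y
  simp only [Set.mem_iUnion, exists_prop]
  constructor
  · rintro ⟨l, hl, hy⟩
    refine ⟨L.get l, ?_, hy⟩
    have : (L.take k).get ⟨l, by simp [Nat.lt_min, hl, l.isLt]⟩ = L.get l := by
      simp [List.getElem_take]
    rw [← this]
    exact List.get_mem _ _
  · rintro ⟨x, hx, hy⟩
    rcases List.mem_iff_get.1 hx with ⟨m, hm⟩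
    have hml : (m : ℕ) < L.length := lt_of_lt_of_le m.isLt (by simp [List.length_take])
    have hmk : (m : ℕ) < k := lt_of_lt_of_le m.isLt (by simp [List.length_take])
    refine ⟨⟨m, hml⟩, hmk, ?_⟩
    have : L.get ⟨m, hml⟩ = (L.take k).get m := by
      simp [List.getElem_take]
    rw [this, hm]
    exact hy

theorem biUnion_list_eq_range {α β : Type*} (L : List α) (hL : L ≠ []) (d : α) (f : α → Set β) :
    (⋃ j ∈ Finset.range ((L.length - 1) + 1), f (L.getD j d)) = ⋃ x ∈ L, f x := by
  have hlen : L.length - 1 + 1 = L.length := Nat.succ_pred_eq_of_pos (List.length_pos_iff.2 hL)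
  ext y
  simp only [Set.mem_iUnion, exists_prop, Finset.mem_range, hlen]
  constructor
  · rintro ⟨j, hj, hy⟩
    refine ⟨L.getD j d, ?_, hy⟩
    rw [List.getD_eq_getElem L d hj]
    exact List.getElem_mem hj
  · rintro ⟨x, hx, hy⟩
    rcases List.mem_iff_getElem.1 hx with ⟨j, hj, hjx⟩
    exact ⟨j, hj, by rwa [List.getD_eq_getElem L d hj, hjx]⟩

theorem cube_inner {n : ℕ} {c x : Fin n → ℝ} {rQ δ : ℝ} (hr : 0 < rQ) (hδ : 0 < δ)
    (hδ1 : δ ≤ 1) (hx : x ∈ closedBall c rQ) :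
    ∃ z : Fin n → ℝ, closedBall z (δ * rQ / 2) ⊆ closedBall c rQ ∧
      closedBall z (δ * rQ / 2) ⊆ closedBall x (δ * rQ) := by
  have hx' : ∀ t, |x t - c t| ≤ rQ := by
    intro t
    have := dist_le_pi_dist x c t
    rw [Real.dist_eq] at this
    exact this.trans (mem_closedBall.1 hx)
  refine ⟨fun t => x t + (δ / 2) * (c t - x t), ?_, ?_⟩
  · intro y hy
    rw [mem_closedBall, dist_pi_le_iff hr.le]
    intro t
    have h1 : dist (y t) (x t + (δ / 2) * (c t - x t)) ≤ δ * rQ / 2 :=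
      (dist_le_pi_dist y _ t).trans (mem_closedBall.1 hy)
    have h2 : |x t + (δ / 2) * (c t - x t) - c t| ≤ (1 - δ / 2) * rQ := by
      have : x t + (δ / 2) * (c t - x t) - c t = (1 - δ / 2) * (x t - c t) := by ring
      rw [this, abs_mul, abs_of_nonneg (by linarith : (0:ℝ) ≤ 1 - δ / 2)]
      exact mul_le_mul_of_nonneg_left (hx' t) (by linarith)
    rw [Real.dist_eq] at h1 ⊢
    calc |y t - c t| ≤ |y t - (x t + (δ / 2) * (c t - x t))| +
          |x t + (δ / 2) * (c t - x t) - c t| := by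
          have := abs_sub_le (y t) (x t + (δ / 2) * (c t - x t)) (c t)
          linarith
      _ ≤ δ * rQ / 2 + (1 - δ / 2) * rQ := add_le_add h1 h2
      _ = rQ := by ring
  · intro y hy
    rw [mem_closedBall, dist_pi_le_iff (by positivity)]
    intro t
    have h1 : dist (y t) (x t + (δ / 2) * (c t - x t)) ≤ δ * rQ / 2 :=
      (dist_le_pi_dist y _ t).trans (mem_closedBall.1 hy)
    have h2 : |x t + (δ / 2) * (c t - x t) - x t| ≤ δ / 2 * rQ := by
      have : x t + (δ / 2) * (c t - x t) - x t = (δ / 2) * (c t - x t) := by ring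
      rw [this, abs_mul, abs_of_nonneg (by linarith : (0:ℝ) ≤ δ / 2), abs_sub_comm]
      exact mul_le_mul_of_nonneg_left (hx' t) (by linarith)
    rw [Real.dist_eq] at h1 ⊢
    calc |y t - x t| ≤ |y t - (x t + (δ / 2) * (c t - x t))| +
          |x t + (δ / 2) * (c t - x t) - x t| := by
          have := abs_sub_le (y t) (x t + (δ / 2) * (c t - x t)) (x t)
          linarith
      _ ≤ δ * rQ / 2 + δ / 2 * rQ := add_le_add h1 h2
      _ = δ * rQ := by ring

open MeasureTheory Metric Set
open scoped ENNReal

/-- The measure `w dx` associated to a weight `w` on ℝⁿ. -/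
noncomputable def weightMeasure (n : ℕ) (w : (Fin n → ℝ) → ℝ≥0∞) : Measure (Fin n → ℝ) :=
  MeasureTheory.volume.withDensity w
theorem weighted_cordoba_fefferman_selection (n : ℕ) (w : (Fin n → ℝ) → ℝ≥0∞)
    (hw : Measurable w)
    (hfin : ∀ (c : Fin n → ℝ) (r : ℝ), 0 < r → weightMeasure n w (closedBall c r) < ⊤)
    (hpos : ∀ (c : Fin n → ℝ) (r : ℝ), 0 < r → 0 < weightMeasure n w (closedBall c r))
    (hboundary : ∀ (c : Fin n → ℝ) (r : ℝ), 0 < r →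
      weightMeasure n w (closedBall c r \ ball c r) = 0)
    (C γ : ℝ) (hC : 0 < C) (hγ : 0 < γ)
    (hratio : ∀ (x₁ x₂ : Fin n → ℝ) (r₁ r₂ : ℝ), 0 < r₁ → 0 < r₂ →
      closedBall x₁ r₁ ⊆ closedBall x₂ r₂ →
      ENNReal.ofReal (C * (r₁ / r₂) ^ γ) * weightMeasure n w (closedBall x₂ r₂) ≤
        weightMeasure n w (closedBall x₁ r₁))
    (A a : ℝ) (hA : 0 < A) (ha : 0 < a)
    (henl : ∀ (K : ℕ) (c : ℕ → (Fin n → ℝ)) (r : ℕ → ℝ), (∀ j ≤ K, 0 < r j) →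
      ∀ δ : ℝ, 0 < δ → δ < 1 →
        weightMeasure n w
            ((⋃ j ∈ Finset.range (K + 1), closedBall (c j) ((1 + δ) * r j)) \
              ⋃ j ∈ Finset.range (K + 1), closedBall (c j) (r j)) ≤
          ENNReal.ofReal (A * δ ^ a) *
            weightMeasure n w (⋃ j ∈ Finset.range (K + 1), closedBall (c j) (r j))) :
    ∃ C' c' : ℝ, 0 < C' ∧ 0 < c' ∧
      ∀ ξ : ℝ, 0 < ξ → ξ < 1 →
      ∀ (N : ℕ) (c : Fin N → (Fin n → ℝ)) (r : Fin N → ℝ), (∀ j, 0 < r j) →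
        ∃ (M : ℕ) (σ : Fin M → Fin N), Function.Injective σ ∧
          weightMeasure n w (⋃ j, closedBall (c j) (r j)) ≤
            (1 + ENNReal.ofReal (C' * ξ ^ c')) *
              weightMeasure n w (⋃ k, closedBall (c (σ k)) (r (σ k))) ∧
          ∀ k : Fin M, 0 < (k : ℕ) →
            ENNReal.ofReal ξ * weightMeasure n w (closedBall (c (σ k)) (r (σ k))) <
              weightMeasure n w (closedBall (c (σ k)) (r (σ k)) \
                ⋃ (l : Fin M) (_ : l < k), closedBall (c (σ l)) (r (σ l))) := by
  classical
  have hc'pos : 0 < a / γ := div_pos ha hγ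
  set c' : ℝ := a / γ with hc'def
  have hξ₀ : 0 < C * (2:ℝ) ^ (-γ) / 2 := by positivity
  set ξ₀ : ℝ := C * (2:ℝ) ^ (-γ) / 2 with hξ₀def
  set K₁ : ℝ := (1 + A * (1/2:ℝ) ^ a) ^ (3:ℕ) with hK₁def
  have hK₁pos : 0 < K₁ := by positivity
  set C' : ℝ := max (A * (2:ℝ) ^ a * (2 / C) ^ c') (K₁ / ξ₀ ^ c') with hC'def
  have hC'pos : 0 < C' := lt_of_lt_of_le (by positivity) (le_max_left _ _)
  refine ⟨C', c', hC'pos, hc'pos, ?_⟩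
  intro ξ hξ hξ1 N c r hr
  rcases Nat.eq_zero_or_pos N with hN | hN
  · subst hN
    refine ⟨0, Fin.elim0, fun k => k.elim0, ?_, fun k => k.elim0⟩
    simp
  -- sort positions by decreasing radius
  set π : Equiv.Perm (Fin N) := Tuple.sort (fun j => -r j) with hπdef
  set cc : Fin N → (Fin n → ℝ) := fun m => c (π m) with hccdef
  set rr : Fin N → ℝ := fun m => r (π m) with hrrdef
  have hrr : ∀ m, 0 < rr m := fun m => hr _
  have hmono : ∀ {m i : Fin N}, m ≤ i → rr i ≤ rr m := by
    intro m i h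
    have := Tuple.monotone_sort (fun j => -r j) h
    simpa [rr] using this
  set Q : Fin N → Set (Fin n → ℝ) := fun m => closedBall (cc m) (rr m) with hQdef
  set μ : Measure (Fin n → ℝ) := weightMeasure n w with hμdef
  have hQfin : ∀ m, μ (Q m) < ⊤ := fun m => hfin _ _ (hrr m)
  have hQpos : ∀ m, 0 < μ (Q m) := fun m => hpos _ _ (hrr m)
  set good : Fin N → List (Fin N) → Prop :=
    fun i L => ENNReal.ofReal ξ * μ (Q i) < μ (Q i \ ⋃ m ∈ L, Q m) with hgooddef
  set F : List (Fin N) := cfGreedy good N with hFdef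
  have hgoodfirst : ∀ (i : Fin N), good i [] := by
    intro i
    have : ENNReal.ofReal ξ * μ (Q i) < 1 * μ (Q i) := by
      rw [ENNReal.mul_lt_mul_iff_left (hQpos i).ne' (hQfin i).ne]
      exact ENNReal.ofReal_lt_one.2 hξ1
    simpa [good] using this
  have hF0 : (⟨0, hN⟩ : Fin N) ∈ F := by
    refine cfGreedy_mem_of_good good hN hN ?_
    have : cfGreedy good 0 = [] := rfl
    rw [this]
    exact hgoodfirst _
  have hFne : F ≠ [] := by intro h; rw [h] at hF0; simp at hF0
  set M := F.length with hMdef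
  have hM : 0 < M := List.length_pos_iff.2 hFne
  set σ : Fin M → Fin N := fun k => π (F.get k) with hσdef
  have hσinj : Function.Injective σ := by
    intro k l hkl
    have h1 : F.get k = F.get l := π.injective hkl
    have hpw := List.pairwise_iff_get.1 (cfGreedy_pairwise good N)
    by_contra hne
    rcases Ne.lt_or_gt hne with h | h
    · exact absurd (h1 ▸ hpw k l h) (lt_irrefl _)
    · exact absurd (h1 ▸ hpw l k h) (lt_irrefl _)
  set E : Set (Fin n → ℝ) := ⋃ m ∈ F, Q m with hEdef
  have hEeq : (⋃ k, closedBall (c (σ k)) (r (σ k))) = E := by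
    ext y
    simp only [hEdef, mem_iUnion, exists_prop]
    constructor
    · rintro ⟨k, hk⟩
      exact ⟨F.get k, List.get_mem _ _, hk⟩
    · rintro ⟨x, hx, hy⟩
      rcases List.mem_iff_get.1 hx with ⟨k, rfl⟩
      exact ⟨k, hy⟩
  have hUeq : (⋃ j, closedBall (c j) (r j)) = ⋃ m, Q m := by
    ext y
    simp only [mem_iUnion]
    constructor
    · rintro ⟨j, hj⟩
      exact ⟨π.symm j, by simpa [hQdef, hccdef, hrrdef] using hj⟩
    · rintro ⟨m, hm⟩
      exact ⟨π m, hm⟩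
  -- the prefix property (ii)
  have hii : ∀ k : Fin M, 0 < (k : ℕ) →
      ENNReal.ofReal ξ * μ (closedBall (c (σ k)) (r (σ k))) <
        μ (closedBall (c (σ k)) (r (σ k)) \
          ⋃ (l : Fin M) (_ : l < k), closedBall (c (σ l)) (r (σ l))) := by
    intro k _
    have hpre : F.take (k : ℕ) ++ [F.get k] <+: F := by
      have h1 : F.take (k : ℕ) ++ [F.get k] = F.take ((k : ℕ) + 1) := by
        simp [List.get_eq_getElem, ← List.concat_eq_append, List.take_concat_get]
      rw [h1]
      exact List.take_prefix _ _
    obtain ⟨htake, hgood⟩ := cfGreedy_take good N (F.take (k : ℕ)) (F.get k) hpre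
    have hun : (⋃ (l : Fin M) (_ : l < k), closedBall (c (σ l)) (r (σ l))) =
        ⋃ m ∈ cfGreedy good ((F.get k : Fin N) : ℕ), Q m := by
      rw [← htake, ← biUnion_take F Q (k : ℕ)]
      rfl
    have hcb : closedBall (c (σ k)) (r (σ k)) = Q (F.get k) := rfl
    rw [hcb, hun]
    exact hgood
  -- unselected cubes
  have hunsel : ∀ i : Fin N, i ∉ F →
      μ (Q i \ ⋃ m ∈ cfGreedy good (i : ℕ), Q m) ≤ ENNReal.ofReal ξ * μ (Q i) := by
    intro i hi
    by_contra hcon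
    rw [not_le] at hcon
    have : (⟨(i : ℕ), i.isLt⟩ : Fin N) ∈ F := by
      refine cfGreedy_mem_of_good good i.isLt i.isLt ?_
      simpa [good, Fin.eta] using hcon
    rw [Fin.eta] at this
    exact hi this
  -- radii in the greedy prefix dominate
  have hGrad : ∀ (i : Fin N), ∀ m ∈ cfGreedy good (i : ℕ), rr i ≤ rr m := by
    intro i m hm
    have := cfGreedy_mem_lt good (i : ℕ) m hm
    exact hmono (le_of_lt this)
  have hGsub : ∀ (i : Fin N), ∀ m ∈ cfGreedy good (i : ℕ), m ∈ F := by
    intro i m hm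
    exact (cfGreedy_prefix good i.isLt.le).subset hm
  refine ⟨M, σ, hσinj, ?_, hii⟩
  rw [hEeq, hUeq]
  rcases lt_or_ge ξ ξ₀ with hcase | hcase
  · -- small ξ
    set δ : ℝ := 2 * (2 * ξ / C) ^ (γ⁻¹) with hδdef
    have hbase : (0:ℝ) < 2 * ξ / C := by positivity
    have hδpos : 0 < δ := by positivity
    have hδlt1 : δ < 1 := by
      have h1 : 2 * ξ / C < (2:ℝ) ^ (-γ) := by
        rw [hξ₀def] at hcase
        rw [div_lt_iff₀ hC]
        nlinarith
      have h2 : (2 * ξ / C) ^ (γ⁻¹) < ((2:ℝ) ^ (-γ)) ^ (γ⁻¹) :=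
        Real.rpow_lt_rpow hbase.le h1 (inv_pos.2 hγ)
      have h3 : ((2:ℝ) ^ (-γ)) ^ (γ⁻¹) = 2⁻¹ := by
        rw [← Real.rpow_mul (by norm_num : (0:ℝ) ≤ 2)]
        rw [show -γ * γ⁻¹ = -1 by field_simp]
        norm_num
      rw [h3] at h2
      rw [hδdef]
      linarith
    have hcover : (⋃ m, Q m) \ E ⊆
        (⋃ m ∈ F, closedBall (cc m) ((1 + δ) * rr m)) \ E := by
      rintro y ⟨hyU, hyE⟩
      rcases mem_iUnion.1 hyU with ⟨i, hyi⟩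
      have hiF : i ∉ F := fun h => hyE (mem_iUnion₂.2 ⟨i, h, hyi⟩)
      refine ⟨?_, hyE⟩
      by_contra hcon
      simp only [mem_iUnion, exists_prop, not_exists, not_and] at hcon
      have hdisj : ∀ p ∈ closedBall y (δ * rr i), p ∉ ⋃ m ∈ cfGreedy good (i : ℕ), Q m := by
        intro p hp hpV
        rcases mem_iUnion₂.1 hpV with ⟨m, hmG, hpm⟩
        have h1 : ¬ (y ∈ closedBall (cc m) ((1 + δ) * rr m)) := hcon m (hGsub i m hmG)
        rw [mem_closedBall, not_le] at h1
        have h2 : dist p (cc m) ≤ rr m := mem_closedBall.1 hpm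
        have h3 : dist p y ≤ δ * rr i := mem_closedBall.1 hp
        have h4 : rr i ≤ rr m := hGrad i m hmG
        have h5 : dist y (cc m) ≤ dist y p + dist p (cc m) := dist_triangle _ _ _
        have h6 : dist y p = dist p y := dist_comm _ _
        have h7 : δ * rr i ≤ δ * rr m := by nlinarith
        linarith
      obtain ⟨z, hz1, hz2⟩ := cube_inner (hrr i) hδpos hδlt1.le hyi
      have hzQ : closedBall z (δ * rr i / 2) ⊆ Q i \ ⋃ m ∈ cfGreedy good (i : ℕ), Q m :=
        fun p hp => ⟨hz1 hp, hdisj p (hz2 hp)⟩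
      have hmeas : ENNReal.ofReal (C * ((δ * rr i / 2) / rr i) ^ γ) * μ (Q i) ≤
          μ (closedBall z (δ * rr i / 2)) :=
        hratio z (cc i) _ _ (by exact div_pos (mul_pos hδpos (hrr i)) two_pos) (hrr i) hz1
      have hle : μ (closedBall z (δ * rr i / 2)) ≤ ENNReal.ofReal ξ * μ (Q i) :=
        (measure_mono hzQ).trans (hunsel i hiF)
      have hcan : ENNReal.ofReal (C * ((δ * rr i / 2) / rr i) ^ γ) ≤ ENNReal.ofReal ξ := by
        rw [← ENNReal.mul_le_mul_iff_left (hQpos i).ne' (hQfin i).ne]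
        exact hmeas.trans hle
      have hreal : C * ((δ * rr i / 2) / rr i) ^ γ ≤ ξ :=
        (ENNReal.ofReal_le_ofReal_iff hξ.le).1 hcan
      have hsimp : (δ * rr i / 2) / rr i = δ / 2 := by
        rw [div_div, mul_comm (2:ℝ) (rr i), ← div_div, mul_div_assoc,
          div_self (hrr i).ne', mul_one]
      rw [hsimp] at hreal
      have hδ2 : (δ / 2 : ℝ) ^ γ = 2 * ξ / C := by
        rw [hδdef, show (2 * (2 * ξ / C) ^ γ⁻¹) / 2 = (2 * ξ / C) ^ γ⁻¹ by ring,
          Real.rpow_inv_rpow hbase.le hγ.ne']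
      rw [hδ2] at hreal
      have hCC : C * (2 * ξ / C) = 2 * ξ := by field_simp
      rw [hCC] at hreal
      linarith
    set d : Fin N := ⟨0, hN⟩ with hddef
    have hrange : ∀ (ρ : Fin N → ℝ),
        (⋃ j ∈ Finset.range (M - 1 + 1), closedBall (cc (F.getD j d)) (ρ (F.getD j d))) =
          ⋃ x ∈ F, closedBall (cc x) (ρ x) := by
      intro ρ
      rw [hMdef]
      exact biUnion_list_eq_range F hFne d (fun x => closedBall (cc x) (ρ x))
    have henl' := henl (M - 1) (fun j => cc (F.getD j d)) (fun j => rr (F.getD j d))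
      (fun j _ => hrr _) δ hδpos hδlt1
    have e1 : (⋃ j ∈ Finset.range (M - 1 + 1),
        closedBall (cc (F.getD j d)) (rr (F.getD j d))) = E := by
      rw [hrange rr, hEdef]
    have e2 : (⋃ j ∈ Finset.range (M - 1 + 1),
        closedBall (cc (F.getD j d)) ((1 + δ) * rr (F.getD j d))) =
        ⋃ m ∈ F, closedBall (cc m) ((1 + δ) * rr m) := hrange (fun x => (1 + δ) * rr x)
    rw [e1, e2] at henl'
    have hfinal : A * δ ^ a ≤ C' * ξ ^ c' := by
      have hd1 : δ ^ a = 2 ^ a * ((2 * ξ / C) ^ γ⁻¹) ^ a := by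
        rw [hδdef, Real.mul_rpow (by norm_num) (Real.rpow_nonneg hbase.le _)]
      have hd2 : ((2 * ξ / C) ^ γ⁻¹) ^ a = (2 * ξ / C) ^ c' := by
        rw [← Real.rpow_mul hbase.le, hc'def, inv_mul_eq_div]
      have hd3 : (2 * ξ / C) ^ c' = (2 / C) ^ c' * ξ ^ c' := by
        rw [show 2 * ξ / C = (2 / C) * ξ by ring,
          Real.mul_rpow (by positivity) hξ.le]
      rw [hd1, hd2, hd3]
      have : A * (2 ^ a * ((2 / C) ^ c' * ξ ^ c')) =
          (A * 2 ^ a * (2 / C) ^ c') * ξ ^ c' := by ring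
      rw [this]
      exact mul_le_mul_of_nonneg_right (le_max_left _ _) (Real.rpow_nonneg hξ.le _)
    calc μ (⋃ m, Q m) ≤ μ (E ∪ ((⋃ m, Q m) \ E)) := by
          refine measure_mono fun y hy => ?_
          by_cases hyE : y ∈ E
          · exact Or.inl hyE
          · exact Or.inr ⟨hy, hyE⟩
      _ ≤ μ E + μ ((⋃ m, Q m) \ E) := measure_union_le _ _
      _ ≤ μ E + μ ((⋃ m ∈ F, closedBall (cc m) ((1 + δ) * rr m)) \ E) :=
          add_le_add le_rfl (measure_mono hcover)
      _ ≤ μ E + ENNReal.ofReal (A * δ ^ a) * μ E := add_le_add le_rfl henl'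
      _ = (1 + ENNReal.ofReal (A * δ ^ a)) * μ E := by rw [one_add_mul]
      _ ≤ (1 + ENNReal.ofReal (C' * ξ ^ c')) * μ E := by
          have := ENNReal.ofReal_le_ofReal hfinal
          gcongr
  · -- large ξ
    have hcover3 : (⋃ m, Q m) ⊆ ⋃ m ∈ F, closedBall (cc m) (3 * rr m) := by
      intro y hy
      rcases mem_iUnion.1 hy with ⟨i, hyi⟩
      by_cases hiF : i ∈ F
      · exact mem_iUnion₂.2 ⟨i, hiF,
          closedBall_subset_closedBall (by linarith [hrr i]) hyi⟩
      · have hle := hunsel i hiF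
        have hne : (Q i ∩ ⋃ m ∈ cfGreedy good (i : ℕ), Q m).Nonempty := by
          by_contra hemp
          rw [not_nonempty_iff_eq_empty] at hemp
          have hdiffeq : Q i \ ⋃ m ∈ cfGreedy good (i : ℕ), Q m = Q i := by
            refine subset_antisymm diff_subset fun p hp => ⟨hp, fun hpV => ?_⟩
            have : p ∈ Q i ∩ ⋃ m ∈ cfGreedy good (i : ℕ), Q m := ⟨hp, hpV⟩
            rw [hemp] at this
            exact this
          rw [hdiffeq] at hle
          have hlt : ENNReal.ofReal ξ * μ (Q i) < μ (Q i) := by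
            calc ENNReal.ofReal ξ * μ (Q i) < 1 * μ (Q i) := by
                  rw [ENNReal.mul_lt_mul_iff_left (hQpos i).ne' (hQfin i).ne]
                  exact ENNReal.ofReal_lt_one.2 hξ1
              _ = μ (Q i) := one_mul _
          exact absurd hle (not_le.2 hlt)
        rcases hne with ⟨p, hpQ, hpV⟩
        rcases mem_iUnion₂.1 hpV with ⟨m, hmG, hpm⟩
        refine mem_iUnion₂.2 ⟨m, hGsub i m hmG, ?_⟩
        rw [mem_closedBall]
        have h4 : rr i ≤ rr m := hGrad i m hmG
        have t0 : dist p (cc i) ≤ rr i := mem_closedBall.1 hpQ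
        have t1 : dist y (cc i) ≤ rr i := mem_closedBall.1 hyi
        have t2 : dist p (cc m) ≤ rr m := mem_closedBall.1 hpm
        have t3 : dist y (cc m) ≤ dist y p + dist p (cc m) := dist_triangle _ _ _
        have t4 : dist y p ≤ dist y (cc i) + dist (cc i) p := dist_triangle _ _ _
        have t5 : dist (cc i) p = dist p (cc i) := dist_comm _ _
        linarith
    set d : Fin N := ⟨0, hN⟩ with hddef
    have hrange : ∀ (ρ : Fin N → ℝ),
        (⋃ j ∈ Finset.range (M - 1 + 1), closedBall (cc (F.getD j d)) (ρ (F.getD j d))) =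
          ⋃ x ∈ F, closedBall (cc x) (ρ x) := by
      intro ρ
      rw [hMdef]
      exact biUnion_list_eq_range F hFne d (fun x => closedBall (cc x) (ρ x))
    set B : ℝ≥0∞ := ENNReal.ofReal (A * (1/2:ℝ) ^ a) with hBdef
    have hstep : ∀ s t : ℝ, 0 < s → t = (3/2) * s →
        μ (⋃ m ∈ F, closedBall (cc m) (t * rr m)) ≤
          (1 + B) * μ (⋃ m ∈ F, closedBall (cc m) (s * rr m)) := by
      intro s t hs hts
      have h := henl (M - 1) (fun j => cc (F.getD j d)) (fun j => s * rr (F.getD j d))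
        (fun j _ => mul_pos hs (hrr _)) (1/2) (by norm_num) (by norm_num)
      have e1 : (⋃ j ∈ Finset.range (M - 1 + 1),
          closedBall (cc (F.getD j d)) (s * rr (F.getD j d))) =
          ⋃ x ∈ F, closedBall (cc x) (s * rr x) := hrange (fun x => s * rr x)
      have e2 : (⋃ j ∈ Finset.range (M - 1 + 1),
          closedBall (cc (F.getD j d)) ((1 + 1/2) * (s * rr (F.getD j d)))) =
          ⋃ x ∈ F, closedBall (cc x) (t * rr x) := by
        have e3 : ∀ x : Fin N, (1 + (1/2:ℝ)) * (s * rr x) = t * rr x := by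
          intro x; rw [hts]; ring
        calc (⋃ j ∈ Finset.range (M - 1 + 1),
            closedBall (cc (F.getD j d)) ((1 + 1/2) * (s * rr (F.getD j d)))) =
            ⋃ x ∈ F, closedBall (cc x) ((1 + 1/2) * (s * rr x)) :=
              hrange (fun x => (1 + 1/2) * (s * rr x))
          _ = ⋃ x ∈ F, closedBall (cc x) (t * rr x) := by
              simp only [e3]
      rw [e1, e2] at h
      have hsplit : (⋃ m ∈ F, closedBall (cc m) (t * rr m)) ⊆
          (⋃ m ∈ F, closedBall (cc m) (s * rr m)) ∪
          ((⋃ m ∈ F, closedBall (cc m) (t * rr m)) \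
            ⋃ m ∈ F, closedBall (cc m) (s * rr m)) := by
        intro y hy
        by_cases h' : y ∈ ⋃ m ∈ F, closedBall (cc m) (s * rr m)
        · exact Or.inl h'
        · exact Or.inr ⟨hy, h'⟩
      calc μ (⋃ m ∈ F, closedBall (cc m) (t * rr m)) ≤
          μ (⋃ m ∈ F, closedBall (cc m) (s * rr m)) +
            μ ((⋃ m ∈ F, closedBall (cc m) (t * rr m)) \
              ⋃ m ∈ F, closedBall (cc m) (s * rr m)) :=
            (measure_mono hsplit).trans (measure_union_le _ _)
        _ ≤ μ (⋃ m ∈ F, closedBall (cc m) (s * rr m)) +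
            B * μ (⋃ m ∈ F, closedBall (cc m) (s * rr m)) := add_le_add le_rfl h
        _ = (1 + B) * μ (⋃ m ∈ F, closedBall (cc m) (s * rr m)) := by rw [one_add_mul]
    have h1 := hstep 1 (3/2) one_pos (by norm_num)
    have h2 := hstep (3/2) (9/4) (by norm_num) (by norm_num)
    have h3 := hstep (9/4) (27/8) (by norm_num) (by norm_num)
    have hone : (⋃ m ∈ F, closedBall (cc m) (1 * rr m)) = E := by
      rw [hEdef]
      simp only [one_mul]
      rfl
    rw [hone] at h1
    have hmono38 : (⋃ m ∈ F, closedBall (cc m) (3 * rr m)) ⊆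
        ⋃ m ∈ F, closedBall (cc m) ((27/8) * rr m) := by
      refine iUnion₂_mono fun m _ => closedBall_subset_closedBall ?_
      linarith [hrr m]
    have hchain : μ (⋃ m, Q m) ≤ (1 + B) * ((1 + B) * ((1 + B) * μ E)) :=
      calc μ (⋃ m, Q m) ≤ μ (⋃ m ∈ F, closedBall (cc m) (3 * rr m)) :=
            measure_mono hcover3
        _ ≤ μ (⋃ m ∈ F, closedBall (cc m) ((27/8) * rr m)) := measure_mono hmono38
        _ ≤ (1 + B) * μ (⋃ m ∈ F, closedBall (cc m) ((9/4) * rr m)) := h3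
        _ ≤ (1 + B) * ((1 + B) * μ (⋃ m ∈ F, closedBall (cc m) ((3/2) * rr m))) :=
            mul_le_mul_right h2 _
        _ ≤ (1 + B) * ((1 + B) * ((1 + B) * μ E)) :=
            mul_le_mul_right (mul_le_mul_right h1 _) _
    have hBof : (1 + B) = ENNReal.ofReal (1 + A * (1/2:ℝ) ^ a) := by
      rw [hBdef, ENNReal.ofReal_add (by norm_num) (by positivity), ENNReal.ofReal_one]
    have hK : (1 + B) * ((1 + B) * ((1 + B) * μ E)) = ENNReal.ofReal K₁ * μ E := by
      rw [hBof, ← mul_assoc, ← mul_assoc,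
        ← ENNReal.ofReal_mul (by positivity), ← ENNReal.ofReal_mul (by positivity),
        mul_assoc]
      congr 1
      rw [hK₁def]
      congr 1
      ring
    have hfinal2 : ENNReal.ofReal K₁ ≤ 1 + ENNReal.ofReal (C' * ξ ^ c') := by
      have hξ' : ξ₀ ^ c' ≤ ξ ^ c' := Real.rpow_le_rpow hξ₀.le hcase hc'pos.le
      have hcancel : K₁ / ξ₀ ^ c' * ξ₀ ^ c' = K₁ :=
        div_mul_cancel₀ _ (by positivity)
      have hC'ge : K₁ ≤ C' * ξ ^ c' := by
        calc K₁ = K₁ / ξ₀ ^ c' * ξ₀ ^ c' := hcancel.symm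
          _ ≤ C' * ξ ^ c' :=
            mul_le_mul (le_max_right _ _) hξ' (by positivity) hC'pos.le
      calc ENNReal.ofReal K₁ ≤ ENNReal.ofReal (1 + C' * ξ ^ c') :=
            ENNReal.ofReal_le_ofReal (by linarith)
        _ ≤ 1 + ENNReal.ofReal (C' * ξ ^ c') := by
            rw [ENNReal.ofReal_add (by norm_num) (by positivity), ENNReal.ofReal_one]
    calc μ (⋃ m, Q m) ≤ (1 + B) * ((1 + B) * ((1 + B) * μ E)) := hchain
      _ = ENNReal.ofReal K₁ * μ E := hK
      _ ≤ (1 + ENNReal.ofReal (C' * ξ ^ c')) * μ E :=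
          mul_le_mul_left hfinal2 _
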